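/- Let $K, P$ be positive integers with $2K \le P$ and let $q \le K$ be a positive integer. Then $\sum_{u=q}^{K} \binom{K}{u}\binom{P-K}{K-u} \le \binom{K}{q}^2 \binom{P-q}{K-q}$, and dividing by $\binom{P}{K}$ gives $p_{s,q} \le \binom{K}{q}^2 / \binom{P}{q}$. -/

import Mathlib

theorem stmt17 (K P q : ℕ) (hK1 : 1 ≤ K) (hKP : 2 * K ≤ P)
    (hq1 : 1 ≤ q) (hqK : q ≤ K) :
    (∑ u ∈ Finset.Icc q K, K.choose u * (P - K).choose (K - u)
      ≤ K.choose q ^ 2 * (P - q).choose (K - q))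
    ∧ (∑ u ∈ Finset.Icc q K,
        (K.choose u * (P - K).choose (K - u) : ℝ) / (P.choose K : ℝ))
      ≤ (K.choose q : ℝ) ^ 2 / (P.choose q : ℝ) := by
  have hKP' : K ≤ P := by omega
  -- Vandermonde rewritten
  have hvan : ∑ u ∈ Finset.Icc q K, (K - q).choose (u - q) * (P - K).choose (K - u)
      = (P - q).choose (K - q) := by
    have h1 : K - q + (P - K) = P - q := by omega
    rw [← h1, Nat.add_choose_eq, Finset.Nat.sum_antidiagonal_eq_sum_range_succ_mk]
    refine Finset.sum_nbij' (fun u => u - q) (fun k => k + q) ?_ ?_ ?_ ?_ ?_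
    · intro u hu; simp only [Finset.mem_Icc] at hu; simp only [Finset.mem_range]; omega
    · intro k hk; simp only [Finset.mem_range] at hk; simp only [Finset.mem_Icc]; omega
    · intro u hu; simp only [Finset.mem_Icc] at hu; omega
    · intro k hk; simp only [Finset.mem_range] at hk; omega
    · intro u hu; simp only [Finset.mem_Icc] at hu; dsimp only
      have h3 : K - q - (u - q) = K - u := by omega
      rw [h3]
  -- termwise bound
  have hterm : ∀ u ∈ Finset.Icc q K, K.choose u * (P - K).choose (K - u)
      ≤ K.choose q * ((K - q).choose (u - q) * (P - K).choose (K - u)) := by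
    intro u hu
    simp only [Finset.mem_Icc] at hu
    have h := Nat.choose_mul (n := K) (k := u) (s := q) hu.1
    have hpos : 1 ≤ u.choose q := Nat.choose_pos hu.1
    calc K.choose u * (P - K).choose (K - u)
        ≤ (K.choose u * u.choose q) * (P - K).choose (K - u) :=
          Nat.mul_le_mul_right _ (Nat.le_mul_of_pos_right _ hpos)
      _ = K.choose q * ((K - q).choose (u - q) * (P - K).choose (K - u)) := by
          rw [h]; ring
  have hsum : ∑ u ∈ Finset.Icc q K, K.choose u * (P - K).choose (K - u)
      ≤ K.choose q * (P - q).choose (K - q) := by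
    calc ∑ u ∈ Finset.Icc q K, K.choose u * (P - K).choose (K - u)
        ≤ ∑ u ∈ Finset.Icc q K, K.choose q * ((K - q).choose (u - q) * (P - K).choose (K - u)) :=
          Finset.sum_le_sum hterm
      _ = K.choose q * (P - q).choose (K - q) := by rw [← Finset.mul_sum, hvan]
  have hid : P.choose K * K.choose q = P.choose q * (P - q).choose (K - q) :=
    Nat.choose_mul hqK
  have hPK : (0:ℝ) < P.choose K := by exact_mod_cast Nat.choose_pos hKP'
  have hPq : (0:ℝ) < P.choose q := by exact_mod_cast Nat.choose_pos (hqK.trans hKP')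
  constructor
  · calc ∑ u ∈ Finset.Icc q K, K.choose u * (P - K).choose (K - u)
        ≤ K.choose q * (P - q).choose (K - q) := hsum
      _ ≤ K.choose q ^ 2 * (P - q).choose (K - q) := by
          exact Nat.mul_le_mul_right _ (Nat.le_self_pow two_ne_zero _)
  · rw [← Finset.sum_div, div_le_div_iff₀ hPK hPq]
    have hsum' : (∑ u ∈ Finset.Icc q K, (K.choose u * (P - K).choose (K - u) : ℝ))
        ≤ (K.choose q : ℝ) * (P - q).choose (K - q) := by
      exact_mod_cast hsum
    have hid' : (P.choose K : ℝ) * K.choose q = P.choose q * (P - q).choose (K - q) := by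
      exact_mod_cast hid
    have hcast : (∑ u ∈ Finset.Icc q K, ((K.choose u * (P - K).choose (K - u) : ℕ) : ℝ))
        = ∑ u ∈ Finset.Icc q K, (K.choose u : ℝ) * (P - K).choose (K - u) := by
      push_cast; rfl
    nlinarith [hsum', hid', Nat.choose_pos hqK, hPK, hPq]
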